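/- For any x ∈ {−1,1}^k with k odd, the parity Π_{i=1}^k x_i equals sign(Σ_{i=1}^k x_i) evaluated through the piecewise-linear function: Σ_{i=0}^{k} (−1)^{i+1} √k [ReLU(s − (2i−k−1)/√k) − 2·ReLU(s − (2i−k)/√k) + ReLU(s − (2i−k+1)/√k)] where s = (Σ_{i=1}^k x_i)/√k, i.e., this sum of ReLUs computes the parity of x exactly. -/
import Mathlib


/-- A sum of ReLUs computing the parity exactly: for odd `k` and `x ∈ {−1,1}^k`, with
`s = (Σᵢ xᵢ)/√k`, the alternating sum of hat functions built from triples of ReLUs equals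
the parity `Πᵢ xᵢ`. -/
theorem parity_via_relu (k : ℕ) (hk : Odd k) (hk1 : 1 ≤ k) (x : Fin k → ℝ)
    (hx : ∀ i, x i = 1 ∨ x i = -1) :
    ∑ i ∈ Finset.range (k + 1), (-1 : ℝ) ^ (i + 1) * Real.sqrt k *
        (max ((∑ j, x j) / Real.sqrt k - (2 * (i : ℝ) - k - 1) / Real.sqrt k) 0
          - 2 * max ((∑ j, x j) / Real.sqrt k - (2 * (i : ℝ) - k) / Real.sqrt k) 0
          + max ((∑ j, x j) / Real.sqrt k - (2 * (i : ℝ) - k + 1) / Real.sqrt k) 0)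
      = ∏ i, x i := by
  classical
  set P := Finset.univ.filter (fun i => x i = 1) with hP
  set n := P.card with hn
  have hnk : n ≤ k := by
    calc n ≤ (Finset.univ : Finset (Fin k)).card := Finset.card_filter_le _ _
    _ = k := by simp
  have hcard : (Finset.univ.filter (fun i => ¬ x i = 1)).card = k - n := by
    have h := Finset.card_filter_add_card_filter_not
      (s := (Finset.univ : Finset (Fin k))) (p := fun i => x i = 1)
    simp only [Finset.card_univ, Fintype.card_fin] at h
    show _ = k - (Finset.univ.filter (fun i => x i = 1)).card
    omega
  have hsq : (0:ℝ) < Real.sqrt k := Real.sqrt_pos.mpr (by positivity)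
  have hsum : (∑ j, x j) = 2 * (n:ℝ) - k := by
    rw [← Finset.sum_filter_add_sum_filter_not Finset.univ (fun i => x i = 1)]
    have h1 : ∑ i ∈ Finset.univ.filter (fun i => x i = 1), x i = (n:ℝ) := by
      rw [Finset.sum_congr rfl (fun i hi => (Finset.mem_filter.mp hi).2)]
      simp [hn, hP]
    have h2 : ∑ i ∈ Finset.univ.filter (fun i => ¬ x i = 1), x i = -((k:ℝ) - n) := by
      have hc : ∀ i ∈ Finset.univ.filter (fun i => ¬ x i = 1), x i = -1 := by
        intro i hi
        rcases hx i with h | h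
        · exact absurd h (Finset.mem_filter.mp hi).2
        · exact h
      rw [Finset.sum_congr rfl hc, Finset.sum_const, hcard, nsmul_eq_mul,
        Nat.cast_sub hnk]
      ring
    rw [h1, h2]; ring
  have hprod : (∏ i, x i) = (-1:ℝ)^(k - n) := by
    rw [← Finset.prod_filter_mul_prod_filter_not Finset.univ (fun i => x i = 1)]
    have h1 : ∏ i ∈ Finset.univ.filter (fun i => x i = 1), x i = 1 := by
      rw [Finset.prod_congr rfl (fun i hi => (Finset.mem_filter.mp hi).2)]
      simp
    have h2 : ∏ i ∈ Finset.univ.filter (fun i => ¬ x i = 1), x i = (-1:ℝ)^(k - n) := by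
      rw [Finset.prod_congr rfl (fun i hi => ?_)]
      · rw [Finset.prod_const, hcard]
      · rcases hx i with h | h
        · exact absurd h (Finset.mem_filter.mp hi).2
        · exact h
    rw [h1, h2]; ring
  have hm : ∀ u : ℝ, Real.sqrt k * max (u / Real.sqrt k) 0 = max u 0 := fun u => by
    rw [mul_max_of_nonneg _ _ hsq.le, mul_div_cancel₀ _ hsq.ne', mul_zero]
  have key : ∀ i ∈ Finset.range (k + 1),
      (-1 : ℝ) ^ (i + 1) * Real.sqrt k *
        (max ((∑ j, x j) / Real.sqrt k - (2 * (i : ℝ) - k - 1) / Real.sqrt k) 0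
          - 2 * max ((∑ j, x j) / Real.sqrt k - (2 * (i : ℝ) - k) / Real.sqrt k) 0
          + max ((∑ j, x j) / Real.sqrt k - (2 * (i : ℝ) - k + 1) / Real.sqrt k) 0)
      = if i = n then (-1:ℝ)^(n+1) else 0 := by
    intro i _
    have hdiv : ∀ a : ℝ, (∑ j, x j)/Real.sqrt k - a / Real.sqrt k
        = ((2 * (n:ℝ) - k) - a)/Real.sqrt k := by
      intro a; rw [hsum, div_sub_div_same]
    rw [hdiv, hdiv, hdiv]
    have expand : ∀ c A B C : ℝ, c * Real.sqrt k * (A - 2*B + C)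
        = c * (Real.sqrt k * A - 2 * (Real.sqrt k * B) + Real.sqrt k * C) := by
      intros; ring
    rw [expand, hm, hm, hm]
    rcases lt_trichotomy i n with h | h | h
    · have h1 : (i:ℝ) + 1 ≤ n := by exact_mod_cast h
      have e1 : max ((2 * (n:ℝ) - k) - (2 * (i:ℝ) - k - 1)) 0
          = (2 * (n:ℝ) - k) - (2 * (i:ℝ) - k - 1) := max_eq_left (by linarith)
      have e2 : max ((2 * (n:ℝ) - k) - (2 * (i:ℝ) - k)) 0
          = (2 * (n:ℝ) - k) - (2 * (i:ℝ) - k) := max_eq_left (by linarith)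
      have e3 : max ((2 * (n:ℝ) - k) - (2 * (i:ℝ) - k + 1)) 0
          = (2 * (n:ℝ) - k) - (2 * (i:ℝ) - k + 1) := max_eq_left (by linarith)
      rw [e1, e2, e3, if_neg (Nat.ne_of_lt h)]; ring
    · subst h
      have e1 : max ((2 * (n:ℝ) - k) - (2 * (n:ℝ) - k - 1)) 0 = 1 := by
        rw [show (2 * (n:ℝ) - k) - (2 * (n:ℝ) - k - 1) = 1 by ring]; simp
      have e2 : max ((2 * (n:ℝ) - k) - (2 * (n:ℝ) - k)) 0 = 0 := by
        rw [show (2 * (n:ℝ) - k) - (2 * (n:ℝ) - k) = 0 by ring]; simp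
      have e3 : max ((2 * (n:ℝ) - k) - (2 * (n:ℝ) - k + 1)) 0 = 0 := by
        rw [max_eq_right (by linarith)]
      rw [e1, e2, e3, if_pos rfl]; ring
    · have h1 : (n:ℝ) + 1 ≤ i := by exact_mod_cast h
      have e1 : max ((2 * (n:ℝ) - k) - (2 * (i:ℝ) - k - 1)) 0 = 0 :=
        max_eq_right (by linarith)
      have e2 : max ((2 * (n:ℝ) - k) - (2 * (i:ℝ) - k)) 0 = 0 :=
        max_eq_right (by linarith)
      have e3 : max ((2 * (n:ℝ) - k) - (2 * (i:ℝ) - k + 1)) 0 = 0 :=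
        max_eq_right (by linarith)
      rw [e1, e2, e3, if_neg (Nat.ne_of_gt h)]; ring
  rw [Finset.sum_congr rfl key, Finset.sum_ite_eq' (Finset.range (k+1)) n
    (fun _ => (-1:ℝ)^(n+1)), if_pos (Finset.mem_range.mpr (by omega)), hprod]
  rcases Nat.even_or_odd n with he | ho
  · have h1 : Odd (n+1) := Even.add_one he
    have h2 : Odd (k - n) := by
      rcases hk with ⟨m, hm'⟩; rcases he with ⟨a, ha⟩
      exact ⟨m - a, by omega⟩
    rw [h1.neg_one_pow, h2.neg_one_pow]
  · have h1 : Even (n+1) := Odd.add_one ho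
    have h2 : Even (k - n) := by
      rcases hk with ⟨m, hm'⟩; rcases ho with ⟨a, ha⟩
      exact ⟨m - a, by omega⟩
    rw [h1.neg_one_pow, h2.neg_one_pow]
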